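/- Let x, y ∈ ℂ^n be nonzero vectors. There exists Δ ∈ ℂ^{n×n} with Δ + Δ* positive semidefinite and Δx = y if and only if Re(x*y) ≥ 0. -/

import Mathlib

open Matrix
open scoped ComplexOrder

theorem dissipative_vector_mapping_exists_iff
    {n : ℕ} (x y : Fin n → ℂ) (hx : x ≠ 0) (hy : y ≠ 0) :
    (∃ Δ : Matrix (Fin n) (Fin n) ℂ, (Δ + Δᴴ).PosSemidef ∧ Δ *ᵥ x = y) ↔
      0 ≤ ((star x) ⬝ᵥ y).re := by
  set c : ℂ := (star x) ⬝ᵥ y with hc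
  constructor
  · rintro ⟨Δ, hpsd, hΔx⟩
    have h := hpsd.dotProduct_mulVec_nonneg x
    have h1 : star x ⬝ᵥ ((Δ + Δᴴ) *ᵥ x) = c + star c := by
      rw [add_mulVec, dotProduct_add, hΔx]
      congr 1
      rw [dotProduct_mulVec, ← star_mulVec, hΔx]
      simp [dotProduct, hc, Finset.mul_sum, map_sum, mul_comm]
    rw [h1, Complex.le_def] at h
    have := h.1
    simp [Complex.add_re] at this
    linarith
  · intro hre
    have hS : 0 < ∑ i, Complex.normSq (x i) := by
      rcases Function.ne_iff.1 hx with ⟨i, hi⟩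
      have : 0 < Complex.normSq (x i) := by
        simpa [Complex.normSq_pos] using hi
      exact Finset.sum_pos' (fun j _ => Complex.normSq_nonneg _) ⟨i, Finset.mem_univ i, this⟩
    set S : ℝ := ∑ i, Complex.normSq (x i) with hSdef
    have hS0 : (S : ℂ) ≠ 0 := by exact_mod_cast hS.ne'
    have hxx : (star x) ⬝ᵥ x = (S : ℂ) := by
      simp [dotProduct, hSdef, Complex.normSq_eq_conj_mul_self]
    refine ⟨Matrix.of fun i j =>
      (y i * (starRingEnd ℂ) (x j) - x i * (starRingEnd ℂ) (y j)
        + ((starRingEnd ℂ) c / S) * (x i * (starRingEnd ℂ) (x j))) / S, ?_, ?_⟩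
    · have key : (Matrix.of fun i j =>
          (y i * (starRingEnd ℂ) (x j) - x i * (starRingEnd ℂ) (y j)
            + ((starRingEnd ℂ) c / S) * (x i * (starRingEnd ℂ) (x j))) / S : Matrix (Fin n) (Fin n) ℂ)
          + (Matrix.of fun i j =>
          (y i * (starRingEnd ℂ) (x j) - x i * (starRingEnd ℂ) (y j)
            + ((starRingEnd ℂ) c / S) * (x i * (starRingEnd ℂ) (x j))) / S)ᴴ
          = Matrix.of fun i j => ((2 * c.re / (S * S) : ℝ) : ℂ) * (x i * (starRingEnd ℂ) (x j)) := by
        ext i j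
        simp only [Matrix.add_apply, Matrix.conjTranspose_apply, Matrix.of_apply, Complex.star_def,
          map_div₀, map_add, map_sub, _root_.map_mul, Complex.conj_conj, Complex.conj_ofReal]
        have hcc : (starRingEnd ℂ) c + c = 2 * (c.re : ℂ) := by
          rw [add_comm, Complex.add_conj]; push_cast; ring
        push_cast
        field_simp
        linear_combination (x i * (starRingEnd ℂ) (x j)) * hcc
      rw [key]
      refine Matrix.posSemidef_iff_dotProduct_mulVec.mpr ⟨?_, ?_⟩
      · ext i j
        simp only [Matrix.conjTranspose_apply, Matrix.of_apply, Complex.star_def,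
          _root_.map_mul, Complex.conj_conj, Complex.conj_ofReal]
        ring
      · intro v
        have hq : star v ⬝ᵥ ((Matrix.of fun i j => ((2 * c.re / (S * S) : ℝ) : ℂ) * (x i * (starRingEnd ℂ) (x j))) *ᵥ v)
            = ((2 * c.re / (S * S) : ℝ) : ℂ) * ((star x ⬝ᵥ v) * (starRingEnd ℂ) (star x ⬝ᵥ v)) := by
          simp only [dotProduct, mulVec, Matrix.of_apply, Finset.mul_sum, Finset.sum_mul, map_sum,
            _root_.map_mul, Pi.star_apply, Complex.star_def, Complex.conj_conj]
          congr 1; ext i; congr 1; ext j; ring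
        rw [hq]
        have h1 : (0:ℝ) ≤ 2 * c.re / (S * S) := by positivity
        rw [Complex.mul_conj, ← Complex.ofReal_mul]
        exact_mod_cast mul_nonneg h1 (Complex.normSq_nonneg _)
    · ext i
      simp only [mulVec, dotProduct, Matrix.of_apply]
      have e1 : ∑ j, (starRingEnd ℂ) (x j) * x j = (S : ℂ) := by
        simpa [dotProduct] using hxx
      have e2 : ∑ j, (starRingEnd ℂ) (y j) * x j = (starRingEnd ℂ) c := by
        simp [hc, dotProduct, map_sum, mul_comm]
      have expand : ∑ j, (y i * (starRingEnd ℂ) (x j) - x i * (starRingEnd ℂ) (y j)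
            + ((starRingEnd ℂ) c / S) * (x i * (starRingEnd ℂ) (x j))) / S * x j
          = ∑ j, (y i * ((starRingEnd ℂ) (x j) * x j)) / S
            - ∑ j, (x i * ((starRingEnd ℂ) (y j) * x j)) / S
            + ∑ j, (((starRingEnd ℂ) c / S) * (x i * ((starRingEnd ℂ) (x j) * x j))) / S := by
        rw [← Finset.sum_sub_distrib, ← Finset.sum_add_distrib]
        congr 1; ext j; ring
      rw [expand]
      simp only [← Finset.sum_div, ← Finset.mul_sum]
      rw [e1, e2]
      field_simp
      ring
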